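/- arXiv:1003.2153 — 12 statements merged into one kernel-verified Lean document; each statement's English description precedes it below -/
import Mathlib

section
/- Let A : Fin n → EuclideanSpace ℝ (Fin 2) be the vertices of a polygon (with A i ≠ A (i+1) for all i, indices taken cyclically modulo n, and n ≥ 3), let M be a point, and for each i let M_i be the orthogonal projection of M onto the line through A i and A (i+1). Then ∑_{i} dist(M_i, A i)^2 = ∑_{i} dist(M_i, A (i+1))^2. -/
set_option maxHeartbeats 1000000

theorem polygon_projection_sum_sq
    (n : ℕ) (hn : 3 ≤ n)
    (A : Fin n → EuclideanSpace ℝ (Fin 2))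
    (hA : ∀ i : Fin n, A i ≠ A (i + ⟨1, by omega⟩))
    (M : EuclideanSpace ℝ (Fin 2))
    (Mi : Fin n → EuclideanSpace ℝ (Fin 2))
    (hMi : ∀ i : Fin n,
      Mi i = EuclideanGeometry.orthogonalProjection
        (affineSpan ℝ {A i, A (i + ⟨1, by omega⟩)}) M) :
    ∑ i : Fin n, dist (Mi i) (A i) ^ 2
      = ∑ i : Fin n, dist (Mi i) (A (i + ⟨1, by omega⟩)) ^ 2 := by
  haveI : NeZero n := ⟨by omega⟩
  have key : ∀ (i : Fin n) (P : EuclideanSpace ℝ (Fin 2)),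
      P ∈ affineSpan ℝ {A i, A (i + ⟨1, by omega⟩)} →
      dist (Mi i) P ^ 2 = dist M P ^ 2 - dist M (Mi i) ^ 2 := by
    intro i P hP
    have h := EuclideanGeometry.dist_sq_eq_dist_orthogonalProjection_sq_add_dist_orthogonalProjection_sq
      (s := affineSpan ℝ {A i, A (i + ⟨1, by omega⟩)}) M hP
    rw [← hMi i] at h
    rw [dist_comm P M] at h
    rw [dist_comm (Mi i) P]
    nlinarith [h]
  have h1 : ∀ i : Fin n, dist (Mi i) (A i) ^ 2 = dist M (A i) ^ 2 - dist M (Mi i) ^ 2 := by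
    intro i
    exact key i (A i) (subset_affineSpan ℝ _ (by simp))
  have h2 : ∀ i : Fin n, dist (Mi i) (A (i + ⟨1, by omega⟩)) ^ 2
      = dist M (A (i + ⟨1, by omega⟩)) ^ 2 - dist M (Mi i) ^ 2 := by
    intro i
    exact key i _ (subset_affineSpan ℝ _ (by simp))
  have hsum : ∑ i : Fin n, dist M (A i) ^ 2
      = ∑ i : Fin n, dist M (A (i + ⟨1, by omega⟩)) ^ 2 :=
    (Fintype.sum_bijective (· + (⟨1, by omega⟩ : Fin n))
      (Equiv.addRight (⟨1, by omega⟩ : Fin n)).bijective _ _ (fun i => rfl)).symm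
  simp only [h1, h2, Finset.sum_sub_distrib, hsum]
end

section
/- Let A, B, C be affinely independent points of the Euclidean plane, let A' lie strictly between B and C, let B' lie strictly between C and A, let C' lie strictly between A and B, and let P be a point lying strictly between A and A', strictly between B and B', and strictly between C and C'. Then dist(P,A)/dist(P,A') + dist(P,B)/dist(P,B') + dist(P,C)/dist(P,C') ≥ 6. -/
private lemma tangent_aux (x : ℝ) (hx : 0 < x) : (1 - x) / x ≥ 5 - 9 * x := by
  rw [ge_iff_le, le_div_iff₀ hx]; nlinarith [sq_nonneg (3 * x - 1)]

private lemma sbtw_aux (x y z : EuclideanSpace ℝ (Fin 2)) (h : Sbtw ℝ x y z) :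
    ∃ a b : ℝ, 0 < a ∧ 0 < b ∧ a + b = 1 ∧ a • x + b • z = y ∧
      dist y x = b * dist x z ∧ dist y z = a * dist x z := by
  obtain ⟨t, ⟨ht0, ht1⟩, hy⟩ := h.mem_image_Ioo
  rw [AffineMap.lineMap_apply_module] at hy
  refine ⟨1 - t, t, by linarith, ht0, by ring, hy, ?_, ?_⟩
  · have h1 : y - x = t • (z - x) := by rw [← hy]; module
    rw [dist_eq_norm, h1, norm_smul, Real.norm_eq_abs, abs_of_pos ht0,
      dist_eq_norm, norm_sub_rev]
  · have h2 : y - z = (1 - t) • (x - z) := by rw [← hy]; module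
    rw [dist_eq_norm, h2, norm_smul, Real.norm_eq_abs, abs_of_pos (by linarith : (0:ℝ) < 1 - t),
      dist_eq_norm]

theorem cevian_ratio_sum_ge_six
    (A B C A' B' C' P : EuclideanSpace ℝ (Fin 2))
    (hABC : AffineIndependent ℝ ![A, B, C])
    (hA' : Sbtw ℝ B A' C) (hB' : Sbtw ℝ C B' A) (hC' : Sbtw ℝ A C' B)
    (hPA : Sbtw ℝ A P A') (hPB : Sbtw ℝ B P B') (hPC : Sbtw ℝ C P C') :
    dist P A / dist P A' + dist P B / dist P B' + dist P C / dist P C' ≥ 6 := by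
  obtain ⟨a1, b1, ha1, hb1, hs1, hP1, hd1, hd1'⟩ := sbtw_aux A P A' hPA
  obtain ⟨aB, bB, haB, hbB, hsB, hPB1, hdB, hdB'⟩ := sbtw_aux B P B' hPB
  obtain ⟨aC, bC, haC, hbC, hsC, hPC1, hdC, hdC'⟩ := sbtw_aux C P C' hPC
  obtain ⟨a2, b2, ha2, hb2, hs2, hA'1, _, _⟩ := sbtw_aux B A' C hA'
  obtain ⟨a2B, b2B, ha2B, hb2B, hs2B, hB'1, _, _⟩ := sbtw_aux C B' A hB'
  obtain ⟨a2C, b2C, ha2C, hb2C, hs2C, hC'1, _, _⟩ := sbtw_aux A C' B hC'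
  -- distances ratios
  have dA : dist A A' ≠ 0 := (dist_pos.2 hPA.left_ne_right).ne'
  have dB : dist B B' ≠ 0 := (dist_pos.2 hPB.left_ne_right).ne'
  have dC : dist C C' ≠ 0 := (dist_pos.2 hPC.left_ne_right).ne'
  have r1 : dist P A / dist P A' = b1 / a1 := by
    rw [hd1, hd1', mul_div_mul_right _ _ dA]
  have r2 : dist P B / dist P B' = bB / aB := by
    rw [hdB, hdB', mul_div_mul_right _ _ dB]
  have r3 : dist P C / dist P C' = bC / aC := by
    rw [hdC, hdC', mul_div_mul_right _ _ dC]
  -- barycentric weights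
  set w1 : Fin 3 → ℝ := ![a1, b1 * a2, b1 * b2] with hw1def
  set w2 : Fin 3 → ℝ := ![bB * b2B, aB, bB * a2B] with hw2def
  set w3 : Fin 3 → ℝ := ![bC * a2C, bC * b2C, aC] with hw3def
  have hw1 : ∑ i, w1 i = 1 := by
    simp [hw1def, Fin.sum_univ_three]; linear_combination hs1 + b1 * hs2
  have hw2 : ∑ i, w2 i = 1 := by
    simp [hw2def, Fin.sum_univ_three]; linear_combination hsB + bB * hs2B
  have hw3 : ∑ i, w3 i = 1 := by
    simp [hw3def, Fin.sum_univ_three]; linear_combination hsC + bC * hs2C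
  have hc1 : Finset.univ.affineCombination ℝ ![A, B, C] w1 = P := by
    rw [Finset.affineCombination_eq_linear_combination _ _ _ hw1]
    simp [hw1def, Fin.sum_univ_three]
    rw [← hP1, ← hA'1]; module
  have hc2 : Finset.univ.affineCombination ℝ ![A, B, C] w2 = P := by
    rw [Finset.affineCombination_eq_linear_combination _ _ _ hw2]
    simp [hw2def, Fin.sum_univ_three]
    rw [← hPB1, ← hB'1]; module
  have hc3 : Finset.univ.affineCombination ℝ ![A, B, C] w3 = P := by
    rw [Finset.affineCombination_eq_linear_combination _ _ _ hw3]
    simp [hw3def, Fin.sum_univ_three]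
    rw [← hPC1, ← hC'1]; module
  have huniq := (affineIndependent_iff_eq_of_fintype_affineCombination_eq ℝ ![A, B, C]).1 hABC
  have h12 : w1 = w2 := huniq w1 w2 hw1 hw2 (hc1.trans hc2.symm)
  have h13 : w1 = w3 := huniq w1 w3 hw1 hw3 (hc1.trans hc3.symm)
  have e1 : b1 * a2 = aB := by have := congrFun h12 1; simpa [hw1def, hw2def] using this
  have e2 : b1 * b2 = aC := by have := congrFun h13 2; simpa [hw1def, hw3def] using this
  have hsum : a1 + aB + aC = 1 := by
    have := hw1
    simp [hw1def, Fin.sum_univ_three] at this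
    linarith [e1, e2]
  -- final inequality
  have hb1' : b1 = 1 - a1 := by linarith
  have hbB' : bB = 1 - aB := by linarith
  have hbC' : bC = 1 - aC := by linarith
  rw [r1, r2, r3, hb1', hbB', hbC']
  linarith [tangent_aux a1 ha1, tangent_aux aB haB, tangent_aux aC haC]
end

section
/- Let A, B, C be affinely independent points of the Euclidean plane, let A' lie strictly between B and C, let B' lie strictly between C and A, let C' lie strictly between A and B, and let P be a point lying strictly between A and A', strictly between B and B', and strictly between C and C'. Then (dist(P,A)/dist(P,A')) · (dist(P,B)/dist(P,B')) · (dist(P,C)/dist(P,C')) ≥ 8. -/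
open AffineMap

/-- From the cevian data, decompose `P` as a convex combination and compute the distance ratio. -/
lemma cevian_decomp {A B C A' P : EuclideanSpace ℝ (Fin 2)}
    (hA' : Sbtw ℝ B A' C) (hPA : Sbtw ℝ A P A') :
    ∃ s t : ℝ, 0 < s ∧ s < 1 ∧ 0 < t ∧ t < 1 ∧
      P = (1 - s) • A + (s * (1 - t)) • B + (s * t) • C ∧
      dist P A / dist P A' = s / (1 - s) := by
  obtain ⟨⟨t, ht, hA'eq⟩, -⟩ := sbtw_iff_mem_image_Ioo_and_ne.1 hA'
  obtain ⟨⟨s, hs, hPeq⟩, -⟩ := sbtw_iff_mem_image_Ioo_and_ne.1 hPA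
  have hd : dist A A' ≠ 0 := dist_ne_zero.2 hPA.left_ne_right
  refine ⟨s, t, hs.1, hs.2, ht.1, ht.2, ?_, ?_⟩
  · rw [← hPeq, ← hA'eq, lineMap_apply_module, lineMap_apply_module]
    module
  · rw [← hPeq, dist_lineMap_left, dist_lineMap_right, Real.norm_eq_abs, Real.norm_eq_abs,
      abs_of_pos hs.1, abs_of_pos (by linarith [hs.2] : (0:ℝ) < 1 - s)]
    rw [mul_div_mul_right _ _ hd]

/-- Equate barycentric coefficients using affine independence. -/
lemma coeff_eq {A B C : EuclideanSpace ℝ (Fin 2)}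
    (hABC : AffineIndependent ℝ ![A, B, C]) {a b c a' b' c' : ℝ}
    (heq : a • A + b • B + c • C = a' • A + b' • B + c' • C)
    (hsum : a + b + c = a' + b' + c') :
    a = a' ∧ b = b' ∧ c = c' := by
  have key := affineIndependent_iff.1 hABC Finset.univ ![a - a', b - b', c - c']
  simp only [Fin.sum_univ_three, Matrix.cons_val_zero, Matrix.cons_val_one, Matrix.head_cons,
    Matrix.cons_val_two, Matrix.tail_cons] at key
  have h := key (by linarith) (by
    have : (a - a') • A + (b - b') • B + (c - c') • C = 0 := by
      rw [sub_smul, sub_smul, sub_smul]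
      rw [show a • A - a' • A + (b • B - b' • B) + (c • C - c' • C)
        = (a • A + b • B + c • C) - (a' • A + b' • B + c' • C) by abel, heq, sub_self]
    linear_combination (norm := module) this)
  have h0 := h 0 (Finset.mem_univ _)
  have h1 := h 1 (Finset.mem_univ _)
  have h2 := h 2 (Finset.mem_univ _)
  simp only [Matrix.cons_val_zero, Matrix.cons_val_one, Matrix.head_cons, Matrix.cons_val_two,
    Matrix.tail_cons] at h0 h1 h2
  exact ⟨by linarith, by linarith, by linarith⟩

set_option maxHeartbeats 1000000 in
theorem cevian_ratio_prod_ge_eight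
    (A B C A' B' C' P : EuclideanSpace ℝ (Fin 2))
    (hABC : AffineIndependent ℝ ![A, B, C])
    (hA' : Sbtw ℝ B A' C) (hB' : Sbtw ℝ C B' A) (hC' : Sbtw ℝ A C' B)
    (hPA : Sbtw ℝ A P A') (hPB : Sbtw ℝ B P B') (hPC : Sbtw ℝ C P C') :
    dist P A / dist P A' * (dist P B / dist P B') * (dist P C / dist P C') ≥ 8 := by
  obtain ⟨s₁, t₁, hs₁0, hs₁1, ht₁0, ht₁1, hrep₁, hr₁⟩ := cevian_decomp hA' hPA
  obtain ⟨s₂, t₂, hs₂0, hs₂1, ht₂0, ht₂1, hrep₂, hr₂⟩ := cevian_decomp hB' hPB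
  obtain ⟨s₃, t₃, hs₃0, hs₃1, ht₃0, ht₃1, hrep₃, hr₃⟩ := cevian_decomp hC' hPC
  -- rep₂ : P = (1-s₂)•B + s₂(1-t₂)•C + s₂t₂•A, rewritten in A,B,C order
  have hrep₂' : P = (s₂ * t₂) • A + (1 - s₂) • B + (s₂ * (1 - t₂)) • C := by
    rw [hrep₂]; module
  have hrep₃' : P = (s₃ * (1 - t₃)) • A + (s₃ * t₃) • B + (1 - s₃) • C := by
    rw [hrep₃]; module
  have h12 := coeff_eq hABC (hrep₁.symm.trans hrep₂') (by ring)
  have h13 := coeff_eq hABC (hrep₁.symm.trans hrep₃') (by ring)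
  set a := 1 - s₁ with ha
  set b := 1 - s₂ with hb
  set c := 1 - s₃ with hc
  have hB2 : s₁ * (1 - t₁) = b := h12.2.1
  have hC3 : s₁ * t₁ = c := h13.2.2
  have hsum : a + b + c = 1 := by
    have : s₁ * (1 - t₁) + s₁ * t₁ = s₁ := by ring
    rw [← hB2, ← hC3] at *; linarith
  have ha0 : 0 < a := by simp [ha]; linarith
  have hb0 : 0 < b := by simp [hb]; linarith
  have hc0 : 0 < c := by simp [hc]; linarith
  rw [hr₁, hr₂, hr₃]
  clear hrep₁ hrep₂ hrep₃ hrep₂' hrep₃' hABC hA' hB' hC' hPA hPB hPC hr₁ hr₂ hr₃ h12 h13 hB2 hC3 A B C A' B' C' P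
  have h1a : s₁ = 1 - a := by rw [ha]; ring
  have h2b : s₂ = 1 - b := by rw [hb]; ring
  have h3c : s₃ = 1 - c := by rw [hc]; ring
  clear_value a b c
  rw [h1a, h2b, h3c, ge_iff_le, div_mul_div_comm, div_mul_div_comm, le_div_iff₀ (by positivity)]
  nlinarith [sq_nonneg (a - b), sq_nonneg (b - c), sq_nonneg (a - c),
    mul_pos ha0 hb0, mul_pos hb0 hc0, mul_pos ha0 hc0,
    mul_pos (mul_pos ha0 hb0) hc0, mul_nonneg (sq_nonneg (a-b)) hc0.le,
    mul_nonneg (sq_nonneg (b-c)) ha0.le, mul_nonneg (sq_nonneg (a-c)) hb0.le]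
end

section
/- (Van Aubel's theorem) Let A, B, C be affinely independent points of the Euclidean plane, let A' lie strictly between B and C, let B' lie strictly between C and A, let C' lie strictly between A and B, and let P be a point lying strictly between A and A', strictly between B and B', and strictly between C and C'. Then dist(P,A)/dist(P,A') = dist(A,C')/dist(C',B) + dist(A,B')/dist(B',C). -/
open AffineMap

lemma van_aubel_aux (A B C : EuclideanSpace ℝ (Fin 2))
    (h : AffineIndependent ℝ ![A, B, C]) (x y : ℝ)
    (hxy : x • (B - A) + y • (C - A) = 0) : x = 0 ∧ y = 0 := by
  rw [affineIndependent_iff_of_fintype] at h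
  have hw : ∑ i, ![-(x + y), x, y] i = 0 := by
    simp [Fin.sum_univ_three]
  have hv : Finset.univ.weightedVSub ![A, B, C] ![-(x + y), x, y]
      = (0 : EuclideanSpace ℝ (Fin 2)) := by
    rw [Finset.weightedVSub_eq_weightedVSubOfPoint_of_sum_eq_zero _ _ _ hw A,
      Finset.weightedVSubOfPoint_apply]
    simpa [Fin.sum_univ_three, vsub_eq_sub] using hxy
  have h1 := h ![-(x + y), x, y] hw hv 1
  have h2 := h ![-(x + y), x, y] hw hv 2
  simp at h1 h2
  exact ⟨h1, h2⟩

theorem van_aubel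
    (A B C A' B' C' P : EuclideanSpace ℝ (Fin 2))
    (hABC : AffineIndependent ℝ ![A, B, C])
    (hA' : Sbtw ℝ B A' C) (hB' : Sbtw ℝ C B' A) (hC' : Sbtw ℝ A C' B)
    (hPA : Sbtw ℝ A P A') (hPB : Sbtw ℝ B P B') (hPC : Sbtw ℝ C P C') :
    dist P A / dist P A' = dist A C' / dist C' B + dist A B' / dist B' C := by
  obtain ⟨s, hs, hA'eq⟩ := hA'.mem_image_Ioo
  obtain ⟨w, hw, hB'eq⟩ := hB'.mem_image_Ioo
  obtain ⟨v, hv, hC'eq⟩ := hC'.mem_image_Ioo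
  obtain ⟨t, ht, hPAeq⟩ := hPA.mem_image_Ioo
  obtain ⟨u', hu', hPBeq⟩ := hPB.mem_image_Ioo
  obtain ⟨u, hu, hPCeq⟩ := hPC.mem_image_Ioo
  rw [lineMap_apply_module'] at hA'eq hB'eq hC'eq hPAeq hPBeq hPCeq
  obtain ⟨hs0, hs1⟩ := hs; obtain ⟨hw0, hw1⟩ := hw; obtain ⟨hv0, hv1⟩ := hv
  obtain ⟨ht0, ht1⟩ := ht; obtain ⟨hu'0, hu'1⟩ := hu'; obtain ⟨hu0, hu1⟩ := hu
  -- vector equations for P - A in the basis (B - A, C - A)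
  have ePA : P - A = (t * (1 - s)) • (B - A) + (t * s) • (C - A) := by
    rw [← hPAeq, ← hA'eq]; module
  have ePC : P - A = (u * v) • (B - A) + (1 - u) • (C - A) := by
    rw [← hPCeq, ← hC'eq]; module
  have ePB : P - A = (1 - u') • (B - A) + (u' * (1 - w)) • (C - A) := by
    rw [← hPBeq, ← hB'eq]; module
  have e12 := van_aubel_aux A B C hABC (t * (1 - s) - u * v) (t * s - (1 - u)) (by
    rw [sub_smul, sub_smul]
    linear_combination (norm := module) ePC - ePA)
  have e34 := van_aubel_aux A B C hABC (t * (1 - s) - (1 - u')) (t * s - u' * (1 - w)) (by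
    rw [sub_smul, sub_smul]
    linear_combination (norm := module) ePB - ePA)
  have e1 : t * (1 - s) = u * v := by linarith [e12.1]
  have e2 : t * s = 1 - u := by linarith [e12.2]
  have e3 : t * (1 - s) = 1 - u' := by linarith [e34.1]
  have e4 : t * s = u' * (1 - w) := by linarith [e34.2]
  -- nonzero vectors
  have hAA' : (0:ℝ) < ‖A' - A‖ :=
    norm_pos_iff.mpr (sub_ne_zero.mpr hPA.left_ne_right.symm)
  have hBA : (0:ℝ) < ‖B - A‖ :=
    norm_pos_iff.mpr (sub_ne_zero.mpr hC'.left_ne_right.symm)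
  have hCA : (0:ℝ) < ‖C - A‖ :=
    norm_pos_iff.mpr (sub_ne_zero.mpr hB'.left_ne_right)
  -- distance computations
  have d1 : dist P A = t * ‖A' - A‖ := by
    rw [dist_eq_norm]
    have : P - A = t • (A' - A) := by rw [← hPAeq]; module
    rw [this, norm_smul, Real.norm_eq_abs, abs_of_pos ht0]
  have d2 : dist P A' = (1 - t) * ‖A' - A‖ := by
    rw [dist_eq_norm]
    have : P - A' = (1 - t) • (A - A') := by rw [← hPAeq]; module
    rw [this, norm_smul, Real.norm_eq_abs, abs_of_pos (by linarith), norm_sub_rev]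
  have d3 : dist A C' = v * ‖B - A‖ := by
    rw [dist_eq_norm]
    have : A - C' = v • (A - B) := by rw [← hC'eq]; module
    rw [this, norm_smul, Real.norm_eq_abs, abs_of_pos hv0, norm_sub_rev]
  have d4 : dist C' B = (1 - v) * ‖B - A‖ := by
    rw [dist_eq_norm]
    have : C' - B = (1 - v) • (A - B) := by rw [← hC'eq]; module
    rw [this, norm_smul, Real.norm_eq_abs, abs_of_pos (by linarith), norm_sub_rev]
  have d5 : dist A B' = (1 - w) * ‖C - A‖ := by
    rw [dist_eq_norm]
    have : A - B' = (1 - w) • (A - C) := by rw [← hB'eq]; module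
    rw [this, norm_smul, Real.norm_eq_abs, abs_of_pos (by linarith), norm_sub_rev]
  have d6 : dist B' C = w * ‖C - A‖ := by
    rw [dist_eq_norm]
    have : B' - C = w • (A - C) := by rw [← hB'eq]; module
    rw [this, norm_smul, Real.norm_eq_abs, abs_of_pos hw0, norm_sub_rev]
  rw [d1, d2, d3, d4, d5, d6,
    mul_div_mul_right _ _ (ne_of_gt hAA'), mul_div_mul_right _ _ (ne_of_gt hBA),
    mul_div_mul_right _ _ (ne_of_gt hCA)]
  -- scalar identity
  have hv' : v * (1 - t * s) = t * (1 - s) := by linear_combination -e1 - v * e2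
  have hw' : (1 - t * (1 - s)) * (1 - w) = t * s := by linear_combination -(1 - w) * e3 - e4
  have eqA : v / (1 - v) = t * (1 - s) / (1 - t) := by
    rw [div_eq_div_iff (ne_of_gt (by linarith : (0:ℝ) < 1 - v)) (ne_of_gt (by linarith : (0:ℝ) < 1 - t))]
    linear_combination hv'
  have eqB : (1 - w) / w = t * s / (1 - t) := by
    rw [div_eq_div_iff (ne_of_gt hw0) (ne_of_gt (by linarith : (0:ℝ) < 1 - t))]
    linear_combination hw'
  rw [eqA, eqB, ← add_div]
  congr 1
  ring
end

section
/- Let A, B, C be points of a real inner product space and let k be a real number. Define A₁ = B + k • (C − B), B₁ = C + k • (A − C), C₁ = A + k • (B − A). Then ‖A − A₁‖² + ‖B − B₁‖² + ‖C − C₁‖² = (k² − k + 1) · (‖A − B‖² + ‖B − C‖² + ‖C − A‖²). -/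
theorem sum_sq_cevians_same_ratio
    {V : Type*} [NormedAddCommGroup V] [InnerProductSpace ℝ V]
    (A B C : V) (k : ℝ) (A₁ B₁ C₁ : V)
    (hA₁ : A₁ = B + k • (C - B)) (hB₁ : B₁ = C + k • (A - C)) (hC₁ : C₁ = A + k • (B - A)) :
    ‖A - A₁‖ ^ 2 + ‖B - B₁‖ ^ 2 + ‖C - C₁‖ ^ 2
      = (k ^ 2 - k + 1) * (‖A - B‖ ^ 2 + ‖B - C‖ ^ 2 + ‖C - A‖ ^ 2) := by
  subst hA₁ hB₁ hC₁
  simp only [← real_inner_self_eq_norm_sq]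
  simp only [inner_sub_left, inner_sub_right, inner_add_left, inner_add_right,
    inner_smul_left, inner_smul_right, real_inner_comm A B, real_inner_comm A C,
    real_inner_comm B C, RCLike.conj_to_real]
  ring
end

section
/- Let A, B, C be points of a real inner product space, not all equal, and let k be a real number. Define A₁ = B + k • (C − B), B₁ = C + k • (A − C), C₁ = A + k • (B − A). Then ‖A − A₁‖² + ‖B − B₁‖² + ‖C − C₁‖² ≥ (3/4) · (‖A − B‖² + ‖B − C‖² + ‖C − A‖²), with equality if and only if k = 1/2; i.e. the minimum of the left-hand side over k is attained exactly when A₁, B₁, C₁ are the midpoints of the sides. -/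
theorem sum_sq_cevians_min_at_midpoints
    {V : Type*} [NormedAddCommGroup V] [InnerProductSpace ℝ V]
    (A B C : V) (hne : ¬ (A = B ∧ B = C)) (k : ℝ) (A₁ B₁ C₁ : V)
    (hA₁ : A₁ = B + k • (C - B)) (hB₁ : B₁ = C + k • (A - C)) (hC₁ : C₁ = A + k • (B - A)) :
    ‖A - A₁‖ ^ 2 + ‖B - B₁‖ ^ 2 + ‖C - C₁‖ ^ 2
        ≥ (3 / 4) * (‖A - B‖ ^ 2 + ‖B - C‖ ^ 2 + ‖C - A‖ ^ 2)
      ∧ (‖A - A₁‖ ^ 2 + ‖B - B₁‖ ^ 2 + ‖C - C₁‖ ^ 2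
          = (3 / 4) * (‖A - B‖ ^ 2 + ‖B - C‖ ^ 2 + ‖C - A‖ ^ 2) ↔ k = 1 / 2) := by
  have expand : ∀ v : V, ‖v‖ ^ 2 = inner ℝ v v := fun v =>
    (real_inner_self_eq_norm_sq v).symm
  have hS : 0 < ‖A - B‖ ^ 2 + ‖B - C‖ ^ 2 + ‖C - A‖ ^ 2 := by
    by_cases hAB : A = B
    · have hBC : B ≠ C := fun h => hne ⟨hAB, h⟩
      have hBC' : B - C ≠ 0 := sub_ne_zero.mpr hBC
      have : 0 < ‖B - C‖ ^ 2 := pow_pos (norm_pos_iff.mpr hBC') 2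
      nlinarith [sq_nonneg ‖A - B‖, sq_nonneg ‖C - A‖]
    · have hAB' : A - B ≠ 0 := sub_ne_zero.mpr hAB
      have : 0 < ‖A - B‖ ^ 2 := pow_pos (norm_pos_iff.mpr hAB') 2
      nlinarith [sq_nonneg ‖B - C‖, sq_nonneg ‖C - A‖]
  have key : ‖A - A₁‖ ^ 2 + ‖B - B₁‖ ^ 2 + ‖C - C₁‖ ^ 2
      = (k ^ 2 - k + 1) * (‖A - B‖ ^ 2 + ‖B - C‖ ^ 2 + ‖C - A‖ ^ 2) := by
    subst hA₁ hB₁ hC₁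
    simp only [expand]
    simp only [inner_sub_left, inner_sub_right, inner_add_left, inner_add_right,
      real_inner_smul_left, real_inner_smul_right, real_inner_comm B A,
      real_inner_comm C A, real_inner_comm C B]
    ring
  constructor
  · rw [key]; nlinarith [sq_nonneg (k - 1 / 2)]
  · rw [key]
    constructor
    · intro h
      have h2 : (k - 1 / 2) ^ 2 * (‖A - B‖ ^ 2 + ‖B - C‖ ^ 2 + ‖C - A‖ ^ 2) = 0 := by
        nlinarith
      have h3 : (k - 1 / 2) ^ 2 = 0 := by
        rcases mul_eq_zero.mp h2 with h | h
        · exact h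
        · linarith
      have := pow_eq_zero_iff (n := 2) (by norm_num) |>.mp h3
      linarith
    · intro h; rw [h]; ring
end

section
/- Let A, B, C be affinely independent points of the Euclidean plane with side lengths a = dist(B,C), b = dist(C,A), c = dist(A,B). Let A₁ lie strictly between B and C, B₁ strictly between C and A, C₁ strictly between A and B, and set α = a · (dist(A₁,B) − dist(A₁,C)), β = b · (dist(B₁,C) − dist(B₁,A)), γ = c · (dist(C₁,A) − dist(C₁,B)). Then the Ceva condition (dist(A₁,B)/dist(A₁,C)) · (dist(B₁,C)/dist(B₁,A)) · (dist(C₁,A)/dist(C₁,B)) = 1 holds if and only if (a² + α)(b² + β)(c² + γ) = (a² − α)(b² − β)(c² − γ). -/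
theorem ceva_condition_iff
    (A B C A₁ B₁ C₁ : EuclideanSpace ℝ (Fin 2))
    (hABC : AffineIndependent ℝ ![A, B, C])
    (hA₁ : Sbtw ℝ B A₁ C) (hB₁ : Sbtw ℝ C B₁ A) (hC₁ : Sbtw ℝ A C₁ B)
    (a b c α β γ : ℝ)
    (ha : a = dist B C) (hb : b = dist C A) (hc : c = dist A B)
    (hα : α = a * (dist A₁ B - dist A₁ C))
    (hβ : β = b * (dist B₁ C - dist B₁ A))
    (hγ : γ = c * (dist C₁ A - dist C₁ B)) :
    (dist A₁ B / dist A₁ C) * (dist B₁ C / dist B₁ A) * (dist C₁ A / dist C₁ B) = 1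
      ↔ (a ^ 2 + α) * (b ^ 2 + β) * (c ^ 2 + γ)
          = (a ^ 2 - α) * (b ^ 2 - β) * (c ^ 2 - γ) := by
  set u := dist A₁ B with hu
  set v := dist A₁ C with hv
  set w := dist B₁ C with hw
  set x := dist B₁ A with hx
  set p := dist C₁ A with hp
  set q := dist C₁ B with hq
  have hu0 : 0 < u := dist_pos.2 hA₁.ne_left
  have hv0 : 0 < v := dist_pos.2 hA₁.ne_right
  have hw0 : 0 < w := dist_pos.2 hB₁.ne_left
  have hx0 : 0 < x := dist_pos.2 hB₁.ne_right
  have hp0 : 0 < p := dist_pos.2 hC₁.ne_left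
  have hq0 : 0 < q := dist_pos.2 hC₁.ne_right
  have hauv : u + v = a := by
    rw [ha, hu, hv, dist_comm A₁ B]; exact hA₁.wbtw.dist_add_dist
  have hbwx : w + x = b := by
    rw [hb, hw, hx, dist_comm B₁ C]; exact hB₁.wbtw.dist_add_dist
  have hcpq : p + q = c := by
    rw [hc, hp, hq, dist_comm C₁ A]; exact hC₁.wbtw.dist_add_dist
  have ha0 : 0 < a := by linarith
  have hb0 : 0 < b := by linarith
  have hc0 : 0 < c := by linarith
  have e1 : a ^ 2 + α = a * (2 * u) := by rw [hα, ← hauv]; ring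
  have e2 : a ^ 2 - α = a * (2 * v) := by rw [hα, ← hauv]; ring
  have e3 : b ^ 2 + β = b * (2 * w) := by rw [hβ, ← hbwx]; ring
  have e4 : b ^ 2 - β = b * (2 * x) := by rw [hβ, ← hbwx]; ring
  have e5 : c ^ 2 + γ = c * (2 * p) := by rw [hγ, ← hcpq]; ring
  have e6 : c ^ 2 - γ = c * (2 * q) := by rw [hγ, ← hcpq]; ring
  rw [e1, e2, e3, e4, e5, e6]
  rw [div_mul_div_comm, div_mul_div_comm, div_eq_one_iff_eq (by positivity)]
  constructor
  · intro h; linear_combination (8 * a * b * c) * h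
  · intro h
    have h2 : (8 * a * b * c) * (u * w * p) = (8 * a * b * c) * (v * x * q) := by
      linear_combination h
    exact mul_left_cancel₀ (by positivity) h2
end

section
/- Let A, B, C be affinely independent points of the Euclidean plane, let A₁ lie strictly between B and C, let B₁ lie strictly between C and A, let C₁ lie strictly between A and B, and let P be a point lying strictly between A and A₁, strictly between B and B₁, and strictly between C and C₁. Then (dist(P,A)/dist(P,A₁)) · (dist(P,B)/dist(P,B₁)) · (dist(P,C)/dist(P,C₁)) = (dist(A,B) · dist(B,C) · dist(C,A)) / (dist(A₁,B) · dist(B₁,C) · dist(C₁,A)). -/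
open AffineMap

private lemma cevian_aux {A B C : EuclideanSpace ℝ (Fin 2)} (h : AffineIndependent ℝ ![A,B,C])
    {a b a' b' : ℝ} (hv : a•(B-A)+b•(C-A) = a'•(B-A)+b'•(C-A)) : a = a' ∧ b = b' := by
  have key := affineIndependent_iff.1 h Finset.univ ![(a'-a)+(b'-b), a-a', b-b'] ?_ ?_
  · have h1 := key 1 (Finset.mem_univ _)
    have h2 := key 2 (Finset.mem_univ _)
    simp at h1 h2
    constructor <;> linarith [sub_eq_zero.1 h1]
  · simp [Fin.sum_univ_three]; ring
  · simp [Fin.sum_univ_three]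
    linear_combination (norm := module) hv

theorem cevian_ratio_product_eq
    (A B C A₁ B₁ C₁ P : EuclideanSpace ℝ (Fin 2))
    (hABC : AffineIndependent ℝ ![A, B, C])
    (hA₁ : Sbtw ℝ B A₁ C) (hB₁ : Sbtw ℝ C B₁ A) (hC₁ : Sbtw ℝ A C₁ B)
    (hPA : Sbtw ℝ A P A₁) (hPB : Sbtw ℝ B P B₁) (hPC : Sbtw ℝ C P C₁) :
    (dist P A / dist P A₁) * (dist P B / dist P B₁) * (dist P C / dist P C₁)
      = (dist A B * dist B C * dist C A) / (dist A₁ B * dist B₁ C * dist C₁ A) := by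
  obtain ⟨t₁, ht₁, hA₁e⟩ := hA₁.mem_image_Ioo
  obtain ⟨t₂, ht₂, hB₁e⟩ := hB₁.mem_image_Ioo
  obtain ⟨t₃, ht₃, hC₁e⟩ := hC₁.mem_image_Ioo
  obtain ⟨s₁, hs₁, hP₁⟩ := hPA.mem_image_Ioo
  obtain ⟨s₂, hs₂, hP₂⟩ := hPB.mem_image_Ioo
  obtain ⟨s₃, hs₃, hP₃⟩ := hPC.mem_image_Ioo
  obtain ⟨ht₁0, ht₁1⟩ := ht₁; obtain ⟨ht₂0, ht₂1⟩ := ht₂; obtain ⟨ht₃0, ht₃1⟩ := ht₃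
  obtain ⟨hs₁0, hs₁1⟩ := hs₁; obtain ⟨hs₂0, hs₂1⟩ := hs₂; obtain ⟨hs₃0, hs₃1⟩ := hs₃
  -- vector equations
  have hv1 : P - A = (s₁*(1-t₁)) • (B-A) + (s₁*t₁) • (C-A) := by
    rw [← hP₁, ← hA₁e]
    simp only [lineMap_apply_module]
    module
  have hv2 : P - A = (1-s₂) • (B-A) + (s₂*(1-t₂)) • (C-A) := by
    rw [← hP₂, ← hB₁e]
    simp only [lineMap_apply_module]
    module
  have hv3 : P - A = (s₃*t₃) • (B-A) + (1-s₃) • (C-A) := by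
    rw [← hP₃, ← hC₁e]
    simp only [lineMap_apply_module]
    module
  obtain ⟨e1, e2⟩ := cevian_aux hABC (hv1.symm.trans hv2)
  obtain ⟨e3, e4⟩ := cevian_aux hABC (hv1.symm.trans hv3)
  -- distances
  have dAA₁ : dist A A₁ ≠ 0 := dist_ne_zero.2 hPA.left_ne_right
  have dBB₁ : dist B B₁ ≠ 0 := dist_ne_zero.2 hPB.left_ne_right
  have dCC₁ : dist C C₁ ≠ 0 := dist_ne_zero.2 hPC.left_ne_right
  have dBC : dist B C ≠ 0 := dist_ne_zero.2 hA₁.left_ne_right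
  have dCA : dist C A ≠ 0 := dist_ne_zero.2 hB₁.left_ne_right
  have dAB : dist A B ≠ 0 := dist_ne_zero.2 hC₁.left_ne_right
  have hd1 : dist P A = s₁ * dist A A₁ := by
    rw [← hP₁, dist_lineMap_left, Real.norm_eq_abs, abs_of_pos hs₁0]
  have hd1' : dist P A₁ = (1-s₁) * dist A A₁ := by
    rw [← hP₁, dist_lineMap_right, Real.norm_eq_abs, abs_of_pos (by linarith)]
  have hd2 : dist P B = s₂ * dist B B₁ := by
    rw [← hP₂, dist_lineMap_left, Real.norm_eq_abs, abs_of_pos hs₂0]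
  have hd2' : dist P B₁ = (1-s₂) * dist B B₁ := by
    rw [← hP₂, dist_lineMap_right, Real.norm_eq_abs, abs_of_pos (by linarith)]
  have hd3 : dist P C = s₃ * dist C C₁ := by
    rw [← hP₃, dist_lineMap_left, Real.norm_eq_abs, abs_of_pos hs₃0]
  have hd3' : dist P C₁ = (1-s₃) * dist C C₁ := by
    rw [← hP₃, dist_lineMap_right, Real.norm_eq_abs, abs_of_pos (by linarith)]
  have hd4 : dist A₁ B = t₁ * dist B C := by
    rw [← hA₁e, dist_lineMap_left, Real.norm_eq_abs, abs_of_pos ht₁0]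
  have hd5 : dist B₁ C = t₂ * dist C A := by
    rw [← hB₁e, dist_lineMap_left, Real.norm_eq_abs, abs_of_pos ht₂0]
  have hd6 : dist C₁ A = t₃ * dist A B := by
    rw [← hC₁e, dist_lineMap_left, Real.norm_eq_abs, abs_of_pos ht₃0]
  rw [hd1, hd1', hd2, hd2', hd3, hd3', hd4, hd5, hd6]
  have f4 : s₁*t₁ = 1-s₃ := e4
  have f3 : s₃*t₃ = 1-s₂ := by linear_combination e1 - e3
  have f2 : s₂*t₂ = s₂+s₃-1 := by linear_combination e2 - e4
  have f1 : (1:ℝ)-s₁ = s₂+s₃-1 := by linear_combination -e1 - e4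
  have key : s₁ * s₂ * s₃ * (t₁ * t₂ * t₃) = (1-s₁) * (1-s₂) * (1-s₃) := by
    linear_combination (s₂*t₂*(s₃*t₃))*f4 + ((1-s₃)*(s₃*t₃))*f2
      + ((1-s₃)*(s₂+s₃-1))*f3 - ((1-s₂)*(1-s₃))*f1
  have h1s : (1:ℝ)-s₁ ≠ 0 := sub_ne_zero.2 (by linarith)
  have h2s : (1:ℝ)-s₂ ≠ 0 := sub_ne_zero.2 (by linarith)
  have h3s : (1:ℝ)-s₃ ≠ 0 := sub_ne_zero.2 (by linarith)
  have lhs_eq : s₁ * dist A A₁ / ((1-s₁) * dist A A₁) * (s₂ * dist B B₁ / ((1-s₂) * dist B B₁))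
      * (s₃ * dist C C₁ / ((1-s₃) * dist C C₁))
      = s₁*s₂*s₃ / ((1-s₁)*(1-s₂)*(1-s₃)) := by
    field_simp
  have rhs_eq : dist A B * dist B C * dist C A
      / (t₁ * dist B C * (t₂ * dist C A) * (t₃ * dist A B))
      = 1 / (t₁*t₂*t₃) := by
    field_simp
  rw [lhs_eq, rhs_eq, div_eq_div_iff (by positivity) (by positivity)]
  linear_combination key
end

section
/- Let A, B, C be affinely independent points of the Euclidean plane forming an acute triangle (each of the angles ∠BAC, ∠ABC, ∠BCA is strictly less than π/2), and let A', B', C' be the feet of the altitudes from A, B, C, i.e. the orthogonal projections of A onto line BC, of B onto line CA, and of C onto line AB. Then dist(A', B') · dist(A', C') = dist(A', B) · dist(A', C). -/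
open EuclideanGeometry

local notation "E" => EuclideanSpace ℝ (Fin 2)

lemma foot_eq (X Y P : EuclideanSpace ℝ (Fin 2)) (h : X ≠ Y) :
    (orthogonalProjection (affineSpan ℝ {X, Y}) P : EuclideanSpace ℝ (Fin 2)) =
      (inner ℝ (P - X) (Y - X) / inner ℝ (Y - X) (Y - X) : ℝ) • (Y - X) + X := by
  set t : ℝ := inner ℝ (P - X) (Y - X) / inner ℝ (Y - X) (Y - X) with ht
  have hYX0 : Y - X ≠ 0 := sub_ne_zero.mpr (Ne.symm h)
  have hYX : (inner ℝ (Y - X) (Y - X) : ℝ) ≠ 0 := by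
    rw [real_inner_self_eq_norm_sq]
    exact pow_ne_zero 2 (norm_ne_zero_iff.mpr hYX0)
  have hmem : t • (Y - X) + X ∈ affineSpan ℝ ({X, Y} : Set _) := by
    simpa [vsub_eq_sub, vadd_eq_add] using smul_vsub_vadd_mem_affineSpan_pair t X Y
  have horth : t • (Y - X) + X ∈
      AffineSubspace.mk' P (affineSpan ℝ ({X, Y} : Set _)).directionᗮ := by
    rw [AffineSubspace.mem_mk', direction_affineSpan, vectorSpan_pair_rev,
      Submodule.mem_orthogonal_singleton_iff_inner_left]
    have he : (t • (Y - X) + X) -ᵥ P = t • (Y - X) - (P - X) := by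
      simp only [vsub_eq_sub]; abel
    simp only [vsub_eq_sub] at he ⊢
    rw [he, inner_sub_left, real_inner_smul_left, ht, div_mul_cancel₀ _ hYX, sub_self]
  have hsing := inter_eq_singleton_orthogonalProjection (s := affineSpan ℝ ({X, Y} : Set _)) P
  have hx : t • (Y - X) + X ∈
      ({(orthogonalProjection (affineSpan ℝ ({X, Y} : Set _)) P :
        EuclideanSpace ℝ (Fin 2))} : Set _) := by
    rw [← hsing]; exact ⟨hmem, horth⟩
  exact (Set.eq_of_mem_singleton hx).symm

lemma comb_inner (u v : EuclideanSpace ℝ (Fin 2)) (α β : ℝ) :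
    (inner ℝ (α • u + β • v) (α • u + β • v) : ℝ) =
      α ^ 2 * inner ℝ u u + 2 * α * β * inner ℝ u v + β ^ 2 * inner ℝ v v := by
  simp only [inner_add_left, inner_add_right, real_inner_smul_left, real_inner_smul_right,
    real_inner_comm v u]
  ring

lemma scalar_key (x y z : ℝ) (hx : x ≠ 0) (hy : y ≠ 0) (hw : x + y - 2*z ≠ 0) :
    ((-((x-z)/(x+y-2*z) - 1))^2 * x
        + 2*(-((x-z)/(x+y-2*z) - 1))*((x-z)/(x+y-2*z) - 1 + (y-z)/y)*z
        + ((x-z)/(x+y-2*z) - 1 + (y-z)/y)^2 * y) *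
      ((1 - (x-z)/(x+y-2*z) - z/x)^2 * x
        + 2*(1 - (x-z)/(x+y-2*z) - z/x)*((x-z)/(x+y-2*z))*z
        + ((x-z)/(x+y-2*z))^2 * y)
    = ((x-z)/(x+y-2*z))^2 * (x+y-2*z) * (((x-z)/(x+y-2*z) - 1)^2 * (x+y-2*z)) := by
  generalize hw2 : x + y - 2*z = w at *
  obtain rfl : x = w - y + 2*z := by linarith
  field_simp
  ring

theorem orthic_foot_dist_prod
    (A B C A' B' C' : EuclideanSpace ℝ (Fin 2))
    (hABC : AffineIndependent ℝ ![A, B, C])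
    (hacuteA : angle B A C < Real.pi / 2)
    (hacuteB : angle A B C < Real.pi / 2)
    (hacuteC : angle B C A < Real.pi / 2)
    (hA' : A' = orthogonalProjection (affineSpan ℝ {B, C}) A)
    (hB' : B' = orthogonalProjection (affineSpan ℝ {C, A}) B)
    (hC' : C' = orthogonalProjection (affineSpan ℝ {A, B}) C) :
    dist A' B' * dist A' C' = dist A' B * dist A' C := by
  have hinj := hABC.injective
  have hAB : A ≠ B := fun h =>
    absurd (hinj (show ![A, B, C] 0 = ![A, B, C] 1 by simpa using h)) (by decide)
  have hBC : B ≠ C := fun h =>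
    absurd (hinj (show ![A, B, C] 1 = ![A, B, C] 2 by simpa using h)) (by decide)
  have hCA : C ≠ A := fun h =>
    absurd (hinj (show ![A, B, C] 2 = ![A, B, C] 0 by simpa using h)) (by decide)
  rw [foot_eq B C A hBC] at hA'
  rw [foot_eq C A B hCA] at hB'
  rw [foot_eq A B C hAB] at hC'
  set u : EuclideanSpace ℝ (Fin 2) := B - A with hu
  set v : EuclideanSpace ℝ (Fin 2) := C - A with hv
  set x : ℝ := inner ℝ u u with hx
  set y : ℝ := inner ℝ v v with hy
  set z : ℝ := inner ℝ u v with hz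
  have hu0 : u ≠ 0 := sub_ne_zero.mpr (Ne.symm hAB)
  have hv0 : v ≠ 0 := sub_ne_zero.mpr hCA
  have hw0 : v - u ≠ 0 := by
    have : v - u = C - B := by rw [hu, hv]; abel
    rw [this]
    exact sub_ne_zero.mpr (Ne.symm hBC)
  have hxne : x ≠ 0 := by
    rw [hx, real_inner_self_eq_norm_sq]; exact pow_ne_zero 2 (norm_ne_zero_iff.mpr hu0)
  have hyne : y ≠ 0 := by
    rw [hy, real_inner_self_eq_norm_sq]; exact pow_ne_zero 2 (norm_ne_zero_iff.mpr hv0)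
  have hCB : C - B = v - u := by rw [hu, hv]; abel
  have hwval : (inner ℝ (v - u) (v - u) : ℝ) = x + y - 2 * z := by
    simp only [inner_sub_left, inner_sub_right, real_inner_comm v u, hx, hy, hz]; ring
  have hwne : x + y - 2 * z ≠ 0 := by
    rw [← hwval, real_inner_self_eq_norm_sq]
    exact pow_ne_zero 2 (norm_ne_zero_iff.mpr hw0)
  -- scalar coefficients
  set t : ℝ := inner ℝ (A - B) (C - B) / inner ℝ (C - B) (C - B) with htdef
  set s : ℝ := inner ℝ (B - C) (A - C) / inner ℝ (A - C) (A - C) with hsdef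
  set r : ℝ := inner ℝ (C - A) (B - A) / inner ℝ (B - A) (B - A) with hrdef
  have hAmB : A - B = -u := by rw [hu]; abel
  have hBmC : B - C = u - v := by rw [hu, hv]; abel
  have hAmC : A - C = -v := by rw [hv]; abel
  have hCmA : C - A = v := by rw [hv]
  have hBmA : B - A = u := by rw [hu]
  have htval : t = (x - z) / (x + y - 2 * z) := by
    rw [htdef, hAmB, hCB, hwval]
    congr 1
    simp [inner_sub_right, inner_neg_left, hx, hz]
    try ring
  have hsval : s = (y - z) / y := by
    rw [hsdef, hBmC, hAmC]
    congr 1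
    · simp [inner_sub_left, inner_neg_right, hy, hz, real_inner_comm v u]
      try ring
    · simp [inner_neg_left, inner_neg_right, hy]
  have hrval : r = z / x := by
    rw [hrdef, hCmA]
    rw [real_inner_comm]
  -- vector expressions for the differences
  have eAB : A' - B = t • ((-1 : ℝ) • u + (1 : ℝ) • v) := by
    rw [hA', hCB]; module
  have eAC : A' - C = (t - 1) • ((-1 : ℝ) • u + (1 : ℝ) • v) := by
    rw [hA', hCB]
    have : C = A + v := by rw [hv]; abel
    rw [this]
    have : B = A + u := by rw [hu]; abel
    rw [this]
    module
  have eABp : A' - B' = (-(t - 1)) • u + (t - 1 + s) • v := by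
    rw [hA', hB', hCB, hAmC]
    have h1 : B = A + u := by rw [hu]; abel
    have h2 : C = A + v := by rw [hv]; abel
    rw [h1, h2]
    module
  have eACp : A' - C' = (1 - t - r) • u + t • v := by
    rw [hA', hC', hCB]
    have h1 : B = A + u := by rw [hu]; abel
    rw [h1]
    module
  -- squared distances
  have dAB2 : dist A' B ^ 2 = t ^ 2 * (x + y - 2 * z) := by
    rw [dist_eq_norm, ← real_inner_self_eq_norm_sq, eAB]
    rw [real_inner_smul_left, inner_smul_right, comb_inner, ← hx, ← hy, ← hz]
    ring
  have dAC2 : dist A' C ^ 2 = (t - 1) ^ 2 * (x + y - 2 * z) := by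
    rw [dist_eq_norm, ← real_inner_self_eq_norm_sq, eAC]
    rw [real_inner_smul_left, inner_smul_right, comb_inner, ← hx, ← hy, ← hz]
    ring
  have dABp2 : dist A' B' ^ 2 =
      (-(t - 1)) ^ 2 * x + 2 * (-(t - 1)) * (t - 1 + s) * z + (t - 1 + s) ^ 2 * y := by
    rw [dist_eq_norm, ← real_inner_self_eq_norm_sq, eABp, comb_inner, ← hx, ← hy, ← hz]
  have dACp2 : dist A' C' ^ 2 =
      (1 - t - r) ^ 2 * x + 2 * (1 - t - r) * t * z + t ^ 2 * y := by
    rw [dist_eq_norm, ← real_inner_self_eq_norm_sq, eACp, comb_inner, ← hx, ← hy, ← hz]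
  rw [htval] at dAB2 dAC2 dABp2 dACp2
  rw [hsval] at dABp2
  rw [hrval] at dACp2
  have key : (dist A' B' * dist A' C') ^ 2 = (dist A' B * dist A' C) ^ 2 := by
    rw [mul_pow, mul_pow, dAB2, dAC2, dABp2, dACp2]
    have := scalar_key x y z hxne hyne hwne
    linarith [this]
  have h1 : 0 ≤ dist A' B' * dist A' C' := mul_nonneg dist_nonneg dist_nonneg
  have h2 : 0 ≤ dist A' B * dist A' C := mul_nonneg dist_nonneg dist_nonneg
  calc dist A' B' * dist A' C' = Real.sqrt ((dist A' B' * dist A' C') ^ 2) :=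
        (Real.sqrt_sq h1).symm
    _ = Real.sqrt ((dist A' B * dist A' C) ^ 2) := by rw [key]
    _ = dist A' B * dist A' C := Real.sqrt_sq h2
end

section
/- (Smarandache's Orthic Theorem) Let A, B, C be affinely independent points of the Euclidean plane forming an acute triangle (each of the angles ∠BAC, ∠ABC, ∠BCA is strictly less than π/2), let A', B', C' be the feet of the altitudes from A, B, C respectively, and write a = dist(B,C), b = dist(C,A), c = dist(A,B), a' = dist(B',C'), b' = dist(C',A'), c' = dist(A',B'). Then 4 · (a'·b' + b'·c' + c'·a') ≤ a² + b² + c². -/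
open EuclideanGeometry RealInnerProductSpace

lemma proj_pair (P Q X : EuclideanSpace ℝ (Fin 2)) (h : Q ≠ P) :
    (orthogonalProjection (affineSpan ℝ {P, Q}) X : EuclideanSpace ℝ (Fin 2)) =
      (⟪X -ᵥ P, Q -ᵥ P⟫ / ‖Q -ᵥ P‖ ^ 2) • (Q -ᵥ P) +ᵥ P := by
  have hv : Q -ᵥ P ≠ 0 := vsub_ne_zero.mpr h
  have hv2 : ‖Q -ᵥ P‖ ^ 2 ≠ 0 := pow_ne_zero 2 (norm_ne_zero_iff.mpr hv)
  set t : ℝ := ⟪X -ᵥ P, Q -ᵥ P⟫ / ‖Q -ᵥ P‖ ^ 2 with ht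
  set q : EuclideanSpace ℝ (Fin 2) := t • (Q -ᵥ P) +ᵥ P with hqdef
  have hq : q ∈ affineSpan ℝ {P, Q} := by
    have := AffineMap.lineMap_mem_affineSpan_pair t P Q
    simpa [AffineMap.lineMap_apply, hqdef] using this
  have horth : q ∈ AffineSubspace.mk' X (affineSpan ℝ ({P, Q} : Set _)).directionᗮ := by
    rw [AffineSubspace.mem_mk', direction_affineSpan, vectorSpan_pair,
      Submodule.mem_orthogonal_singleton_iff_inner_right]
    have : q -ᵥ X = t • (Q -ᵥ P) - (X -ᵥ P) := by
      simp [hqdef, vadd_vsub_assoc]; abel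
    rw [this, inner_sub_right, real_inner_smul_right]
    have e1 : P -ᵥ Q = -(Q -ᵥ P) := (neg_vsub_eq_vsub_rev Q P).symm
    rw [show ⟪P -ᵥ Q, Q -ᵥ P⟫ = -‖Q -ᵥ P‖ ^ 2 by
      rw [e1, inner_neg_left, real_inner_self_eq_norm_sq]]
    rw [show ⟪P -ᵥ Q, X -ᵥ P⟫ = -⟪X -ᵥ P, Q -ᵥ P⟫ by
      rw [e1, inner_neg_left, real_inner_comm]]
    rw [ht, mul_neg, div_mul_cancel₀ _ hv2]
    ring
  have hmem : q ∈ (↑(affineSpan ℝ ({P, Q} : Set _)) : Set _) ∩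
      AffineSubspace.mk' X (affineSpan ℝ ({P, Q} : Set _)).directionᗮ := ⟨hq, horth⟩
  rw [inter_eq_singleton_orthogonalProjection X] at hmem
  exact hmem.symm

lemma key_norm (u v : EuclideanSpace ℝ (Fin 2)) (hu : u ≠ 0) (hv : v ≠ 0)
    (hp : 0 ≤ ⟪u, v⟫) :
    ‖(⟪u, v⟫ / ‖v‖ ^ 2) • v - (⟪u, v⟫ / ‖u‖ ^ 2) • u‖ =
      ⟪u, v⟫ * ‖u - v‖ / (‖u‖ * ‖v‖) := by
  have hu0 : (0:ℝ) < ‖u‖ := norm_pos_iff.mpr hu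
  have hv0 : (0:ℝ) < ‖v‖ := norm_pos_iff.mpr hv
  have h2 : 0 ≤ ⟪u, v⟫ * ‖u - v‖ / (‖u‖ * ‖v‖) := by positivity
  have hsq : ‖(⟪u, v⟫ / ‖v‖ ^ 2) • v - (⟪u, v⟫ / ‖u‖ ^ 2) • u‖ ^ 2 =
      (⟪u, v⟫ * ‖u - v‖ / (‖u‖ * ‖v‖)) ^ 2 := by
    rw [norm_sub_sq_real, norm_smul, norm_smul, real_inner_smul_left, real_inner_smul_right]
    have huv : ‖u - v‖ ^ 2 = ‖u‖ ^ 2 - 2 * ⟪u, v⟫ + ‖v‖ ^ 2 := norm_sub_sq_real u v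
    rw [real_inner_comm v u]
    simp only [Real.norm_eq_abs, mul_pow, sq_abs, div_pow]
    rw [huv]
    field_simp
    rw [real_inner_comm v u]; ring
  rw [← Real.sqrt_sq (norm_nonneg _), hsq, Real.sqrt_sq h2]

lemma inner_pos_of_angle_lt (X Y Z : EuclideanSpace ℝ (Fin 2)) (hXY : X ≠ Y) (hZY : Z ≠ Y)
    (h : angle X Y Z < Real.pi / 2) : 0 < ⟪X -ᵥ Y, Z -ᵥ Y⟫ := by
  have h1 := InnerProductGeometry.cos_angle_mul_norm_mul_norm (X -ᵥ Y) (Z -ᵥ Y)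
  have hx : (0:ℝ) < ‖X -ᵥ Y‖ := norm_pos_iff.mpr (vsub_ne_zero.mpr hXY)
  have hz : (0:ℝ) < ‖Z -ᵥ Y‖ := norm_pos_iff.mpr (vsub_ne_zero.mpr hZY)
  have hcos : 0 < Real.cos (InnerProductGeometry.angle (X -ᵥ Y) (Z -ᵥ Y)) := by
    apply Real.cos_pos_of_mem_Ioo
    constructor
    · have := InnerProductGeometry.angle_nonneg (X -ᵥ Y) (Z -ᵥ Y)
      have := Real.pi_pos
      linarith
    · exact h
  rw [← h1]
  positivity

set_option maxHeartbeats 1000000 in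
theorem smarandache_orthic_theorem
    (A B C A' B' C' : EuclideanSpace ℝ (Fin 2))
    (hABC : AffineIndependent ℝ ![A, B, C])
    (hacuteA : angle B A C < Real.pi / 2)
    (hacuteB : angle A B C < Real.pi / 2)
    (hacuteC : angle B C A < Real.pi / 2)
    (hA' : A' = orthogonalProjection (affineSpan ℝ {B, C}) A)
    (hB' : B' = orthogonalProjection (affineSpan ℝ {C, A}) B)
    (hC' : C' = orthogonalProjection (affineSpan ℝ {A, B}) C)
    (a b c a' b' c' : ℝ)
    (ha : a = dist B C) (hb : b = dist C A) (hc : c = dist A B)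
    (ha' : a' = dist B' C') (hb' : b' = dist C' A') (hc' : c' = dist A' B') :
    4 * (a' * b' + b' * c' + c' * a') ≤ a ^ 2 + b ^ 2 + c ^ 2 := by
  -- distinct points
  have hAB : A ≠ B := by
    have := hABC.injective.ne (show (0 : Fin 3) ≠ 1 by decide); simpa using this
  have hBC : B ≠ C := by
    have := hABC.injective.ne (show (1 : Fin 3) ≠ 2 by decide); simpa using this
  have hCA : C ≠ A := by
    have := hABC.injective.ne (show (2 : Fin 3) ≠ 0 by decide); simpa using this
  -- inner products
  set pA : ℝ := ⟪B -ᵥ A, C -ᵥ A⟫ with hpAdef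
  set pB : ℝ := ⟪C -ᵥ B, A -ᵥ B⟫ with hpBdef
  set pC : ℝ := ⟪A -ᵥ C, B -ᵥ C⟫ with hpCdef
  have hpA : 0 < pA := inner_pos_of_angle_lt B A C hAB.symm hCA hacuteA
  have hpB : 0 < pB := by
    have := inner_pos_of_angle_lt A B C hAB hBC.symm hacuteB
    rwa [real_inner_comm] at this
  have hpC : 0 < pC := by
    have := inner_pos_of_angle_lt B C A hBC hCA.symm hacuteC
    rwa [real_inner_comm] at this
  -- side lengths as norms
  have hna : a = ‖B -ᵥ C‖ := by rw [ha, dist_eq_norm_vsub]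
  have hnb : b = ‖C -ᵥ A‖ := by rw [hb, dist_eq_norm_vsub]
  have hnc : c = ‖A -ᵥ B‖ := by rw [hc, dist_eq_norm_vsub]
  have ha0 : 0 < a := hna ▸ norm_pos_iff.mpr (vsub_ne_zero.mpr hBC)
  have hb0 : 0 < b := hnb ▸ norm_pos_iff.mpr (vsub_ne_zero.mpr hCA)
  have hc0 : 0 < c := hnc ▸ norm_pos_iff.mpr (vsub_ne_zero.mpr hAB)
  -- relations: squares of sides
  have hna' : a = ‖C -ᵥ B‖ := by rw [ha, dist_comm, dist_eq_norm_vsub]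
  have hnb' : b = ‖A -ᵥ C‖ := by rw [hb, dist_comm, dist_eq_norm_vsub]
  have hnc' : c = ‖B -ᵥ A‖ := by rw [hc, dist_comm, dist_eq_norm_vsub]
  have euv : B -ᵥ C = (B -ᵥ A) - (C -ᵥ A) := (vsub_sub_vsub_cancel_right _ _ _).symm
  have eCB : C -ᵥ B = (C -ᵥ A) - (B -ᵥ A) := (vsub_sub_vsub_cancel_right _ _ _).symm
  have eAB : A -ᵥ B = -(B -ᵥ A) := (neg_vsub_eq_vsub_rev _ _).symm
  have eAC : A -ᵥ C = -(C -ᵥ A) := (neg_vsub_eq_vsub_rev _ _).symm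
  have hsa : a ^ 2 = pB + pC := by
    rw [hna, hpBdef, hpCdef, euv, eCB, eAB, eAC, norm_sub_sq_real]
    simp only [inner_sub_left, inner_sub_right, inner_neg_left, inner_neg_right,
      real_inner_self_eq_norm_sq]
    rw [real_inner_comm (C -ᵥ A) (B -ᵥ A)]
    ring
  have hsb : b ^ 2 = pA + pC := by
    rw [hnb, hpAdef, hpCdef, euv, eAC]
    simp only [inner_sub_left, inner_sub_right, inner_neg_left, inner_neg_right,
      real_inner_self_eq_norm_sq]
    rw [real_inner_comm (C -ᵥ A) (B -ᵥ A)]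
    ring
  have hsc : c ^ 2 = pA + pB := by
    rw [hnc', hpAdef, hpBdef, eCB, eAB]
    simp only [inner_sub_left, inner_sub_right, inner_neg_left, inner_neg_right,
      real_inner_self_eq_norm_sq]
    rw [real_inner_comm (C -ᵥ A) (B -ᵥ A)]
    ring
  -- orthic side lengths
  have ha'eq : a' = pA * a / (c * b) := by
    have hB'A : B' = (pA / ‖C -ᵥ A‖ ^ 2) • (C -ᵥ A) +ᵥ A := by
      rw [hB', eq_orthogonalProjection_of_eq_subspace
        (show affineSpan ℝ {C, A} = affineSpan ℝ {A, C} by rw [Set.pair_comm]) B,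
        proj_pair A C B hCA]
    have hC'A : C' = (pA / ‖B -ᵥ A‖ ^ 2) • (B -ᵥ A) +ᵥ A := by
      rw [hC', proj_pair A B C hAB.symm, real_inner_comm, ← hpAdef]
    rw [ha', dist_eq_norm_vsub (EuclideanSpace ℝ (Fin 2)), hB'A, hC'A,
      vadd_vsub_vadd_cancel_right,
      key_norm (B -ᵥ A) (C -ᵥ A) (vsub_ne_zero.mpr hAB.symm) (vsub_ne_zero.mpr hCA) hpA.le,
      ← euv, ← hna, ← hnb, ← hnc']
  have hb'eq : b' = pB * b / (a * c) := by
    have hC'B : C' = (pB / ‖A -ᵥ B‖ ^ 2) • (A -ᵥ B) +ᵥ B := by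
      rw [hC', eq_orthogonalProjection_of_eq_subspace
        (show affineSpan ℝ {A, B} = affineSpan ℝ {B, A} by rw [Set.pair_comm]) C,
        proj_pair B A C hAB]
    have hA'B : A' = (pB / ‖C -ᵥ B‖ ^ 2) • (C -ᵥ B) +ᵥ B := by
      rw [hA', proj_pair B C A hBC.symm, real_inner_comm, ← hpBdef]
    have eca : (C -ᵥ B) - (A -ᵥ B) = C -ᵥ A := vsub_sub_vsub_cancel_right _ _ _
    rw [hb', dist_eq_norm_vsub (EuclideanSpace ℝ (Fin 2)), hC'B, hA'B,
      vadd_vsub_vadd_cancel_right,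
      key_norm (C -ᵥ B) (A -ᵥ B) (vsub_ne_zero.mpr hBC.symm) (vsub_ne_zero.mpr hAB) hpB.le,
      eca, ← hnb, ← hna', ← hnc]
  have hc'eq : c' = pC * c / (b * a) := by
    have hA'C : A' = (pC / ‖B -ᵥ C‖ ^ 2) • (B -ᵥ C) +ᵥ C := by
      rw [hA', eq_orthogonalProjection_of_eq_subspace
        (show affineSpan ℝ {B, C} = affineSpan ℝ {C, B} by rw [Set.pair_comm]) A,
        proj_pair C B A hBC]
    have hB'C : B' = (pC / ‖A -ᵥ C‖ ^ 2) • (A -ᵥ C) +ᵥ C := by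
      rw [hB', proj_pair C A B hCA.symm, real_inner_comm, ← hpCdef]
    have eab : (A -ᵥ C) - (B -ᵥ C) = A -ᵥ B := vsub_sub_vsub_cancel_right _ _ _
    rw [hc', dist_eq_norm_vsub (EuclideanSpace ℝ (Fin 2)), hA'C, hB'C,
      vadd_vsub_vadd_cancel_right,
      key_norm (A -ᵥ C) (B -ᵥ C) (vsub_ne_zero.mpr hCA.symm) (vsub_ne_zero.mpr hBC) hpC.le,
      eab, ← hnc, ← hnb', ← hna]
  clear_value pA pB pC
  -- final algebra
  have k1 : 4 * (a' * b') ≤ c ^ 2 := by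
    have e : a' * b' = pA * pB / c ^ 2 := by
      rw [ha'eq, hb'eq]; field_simp
    rw [e, ← mul_div_assoc, div_le_iff₀ (by positivity : (0:ℝ) < c ^ 2)]
    nlinarith [sq_nonneg (pA - pB), hsc]
  have k2 : 4 * (b' * c') ≤ a ^ 2 := by
    have e : b' * c' = pB * pC / a ^ 2 := by
      rw [hb'eq, hc'eq]; field_simp
    rw [e, ← mul_div_assoc, div_le_iff₀ (by positivity : (0:ℝ) < a ^ 2)]
    nlinarith [sq_nonneg (pB - pC), hsa]
  have k3 : 4 * (c' * a') ≤ b ^ 2 := by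
    have e : c' * a' = pC * pA / b ^ 2 := by
      rw [hc'eq, ha'eq]; field_simp
    rw [e, ← mul_div_assoc, div_le_iff₀ (by positivity : (0:ℝ) < b ^ 2)]
    nlinarith [sq_nonneg (pC - pA), hsb]
  linarith
end

section
/- Let n ≥ 2, let O be a point of the Euclidean plane, let R > 0, and let A : Fin n → EuclideanSpace ℝ (Fin 2) be pairwise distinct points with dist(O, A i) = R for all i. Then there exist indices i ≠ j such that the angle ∠(A i) O (A j) is at most 2π/n. -/
open EuclideanGeometry Real

theorem exists_small_central_angle
    (n : ℕ) (hn : 2 ≤ n)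
    (O : EuclideanSpace ℝ (Fin 2)) (R : ℝ) (hR : 0 < R)
    (A : Fin n → EuclideanSpace ℝ (Fin 2))
    (hinj : Function.Injective A)
    (hdist : ∀ i : Fin n, dist O (A i) = R) :
    ∃ i j : Fin n, i ≠ j ∧
      EuclideanGeometry.angle (A i) O (A j) ≤ 2 * Real.pi / n := by
  haveI : Fact (Module.finrank ℝ (EuclideanSpace ℝ (Fin 2)) = 2) :=
    ⟨finrank_euclideanSpace_fin⟩
  set o : Orientation ℝ (EuclideanSpace ℝ (Fin 2)) (Fin 2) :=
    (EuclideanSpace.basisFun (Fin 2) ℝ).toBasis.orientation with ho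
  have hnpos : (0:ℝ) < n := by positivity
  -- vectors are nonzero
  have hv : ∀ i : Fin n, A i -ᵥ O ≠ 0 := by
    intro i
    rw [vsub_ne_zero]
    intro h
    have := hdist i
    rw [h, dist_self] at this
    linarith
  have i0 : Fin n := ⟨0, by omega⟩
  set v : EuclideanSpace ℝ (Fin 2) := A i0 -ᵥ O with hvdef
  set θ : Fin n → ℝ := fun i => (o.oangle v (A i -ᵥ O)).toReal with hθ
  have hθmem : ∀ i, -π < θ i ∧ θ i ≤ π := fun i =>
    ⟨Real.Angle.neg_pi_lt_toReal _, Real.Angle.toReal_le_pi _⟩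
  set σ := Tuple.sort θ with hσ
  have hmono : Monotone (θ ∘ σ) := Tuple.monotone_sort θ
  set c : ℝ := 2 * π / n with hc
  have hcpos : 0 < c := by positivity
  have hcpi : c ≤ π := by
    have h2n : (2:ℝ) ≤ n := by exact_mod_cast hn
    rw [hc, div_le_iff₀ hnpos]
    nlinarith [Real.pi_pos]
  set g : Fin n → ℝ := θ ∘ σ with hg
  have hlast : n - 1 < n := by omega
  have h0n : 0 < n := by omega
  have key : (∃ k : ℕ, ∃ h : k + 1 < n,
      g ⟨k+1, h⟩ - g ⟨k, by omega⟩ ≤ c) ∨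
      g ⟨0, h0n⟩ + 2 * π - g ⟨n-1, hlast⟩ ≤ c := by
    by_contra hcon
    push_neg at hcon
    obtain ⟨h1, h2⟩ := hcon
    have step : ∀ k (h : k < n), g ⟨0, h0n⟩ + k * c ≤ g ⟨k, h⟩ := by
      intro k
      induction k with
      | zero => intro h; simp
      | succ m ih =>
        intro h
        have hm : m < n := by omega
        have := h1 m h
        have := ih hm
        push_cast
        nlinarith
    have := step (n-1) hlast
    have hn1 : ((n:ℝ) - 1) = ((n-1 : ℕ) : ℝ) := by
      push_cast [Nat.cast_sub (by omega : 1 ≤ n)]; ring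
    rw [← hn1] at this
    rw [hc] at this h2
    have : (n:ℝ) * (2 * π / n) < 2 * π := by nlinarith
    rw [mul_div_cancel₀ _ (ne_of_gt hnpos)] at this
    linarith
  -- common angle computation
  have main : ∀ i j : Fin n, ∀ d : ℝ, 0 ≤ d → d ≤ c →
      (↑d : Real.Angle) = o.oangle (A i -ᵥ O) (A j -ᵥ O) →
      EuclideanGeometry.angle (A i) O (A j) ≤ c := by
    intro i j d hd0 hdc hco
    have hne1 : A i ≠ O := fun h => hv i (by rw [h]; simp)
    have hne2 : A j ≠ O := fun h => hv j (by rw [h]; simp)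
    have : EuclideanGeometry.angle (A i) O (A j)
        = |(o.oangle (A i -ᵥ O) (A j -ᵥ O)).toReal| := by
      exact o.angle_eq_abs_oangle_toReal (hv i) (hv j)
    rw [this, ← hco]
    rw [Real.Angle.toReal_coe_eq_self_iff.2 ⟨by linarith [Real.pi_pos], by linarith⟩]
    rwa [abs_of_nonneg hd0]
  have oangle_diff : ∀ i j : Fin n,
      o.oangle (A i -ᵥ O) (A j -ᵥ O) = (↑(θ j) - ↑(θ i) : Real.Angle) := by
    intro i j
    rw [hθ]
    simp only []
    rw [Real.Angle.coe_toReal, Real.Angle.coe_toReal]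
    rw [← o.oangle_add (hv i) (hvdef ▸ hv i0) (hv j)]
    rw [o.oangle_rev v (A i -ᵥ O)]
    abel
  rcases key with ⟨k, h, hk⟩ | hwrap
  · set i := σ ⟨k, by omega⟩
    set j := σ ⟨k+1, h⟩
    refine ⟨i, j, ?_, ?_⟩
    · intro hij
      have := σ.injective hij
      simp [Fin.ext_iff] at this
    · apply main i j (g ⟨k+1, h⟩ - g ⟨k, by omega⟩)
      · exact sub_nonneg.2 (hmono (by simp [Fin.le_def]))
      · exact hk
      · rw [oangle_diff, ← Real.Angle.coe_sub]
        rfl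
  · set i := σ ⟨n-1, hlast⟩
    set j := σ ⟨0, h0n⟩
    refine ⟨i, j, ?_, ?_⟩
    · intro hij
      have := σ.injective hij
      simp [Fin.ext_iff] at this
      omega
    · apply main i j (g ⟨0, h0n⟩ + 2*π - g ⟨n-1, hlast⟩)
      · have hle : g ⟨0, h0n⟩ ≤ g ⟨n-1, hlast⟩ := hmono (by simp [Fin.le_def])
        have := hθmem i
        have := hθmem j
        simp only [hg, Function.comp] at *
        linarith [(hθmem i).1, (hθmem i).2, (hθmem j).1, (hθmem j).2]
      · exact hwrap
      · rw [oangle_diff]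
        have : ((g ⟨0, h0n⟩ + 2*π - g ⟨n-1, hlast⟩ : ℝ) : Real.Angle)
            = ((g ⟨0, h0n⟩ - g ⟨n-1, hlast⟩ : ℝ) : Real.Angle) := by
          rw [show g ⟨0, h0n⟩ + 2*π - g ⟨n-1, hlast⟩
              = (g ⟨0, h0n⟩ - g ⟨n-1, hlast⟩) + 2*π by ring]
          rw [Real.Angle.coe_add, Real.Angle.coe_two_pi, add_zero]
        rw [this, Real.Angle.coe_sub]
        rfl
end

section
/- Let n ≥ 2, let O be a point of the Euclidean plane, let R > 0, and let A : Fin n → EuclideanSpace ℝ (Fin 2) be pairwise distinct points with dist(O, A i) = R for all i. Then there exist indices i ≠ j such that ‖(A i −ᵥ O) + (A j −ᵥ O)‖ ≥ 2 · R · Real.cos (π / n). -/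
lemma exists_close_angles (n : ℕ) (hn : 2 ≤ n) (θ : Fin n → ℝ)
    (hinj : Function.Injective θ)
    (hlb : ∀ i, -Real.pi < θ i) (hub : ∀ i, θ i ≤ Real.pi) :
    ∃ i j : Fin n, i ≠ j ∧
      Real.cos (θ i - θ j) ≥ Real.cos (2 * Real.pi / n) := by
  have hnpos : (0:ℕ) < n := by omega
  have hπ := Real.pi_pos
  set σ := Tuple.sort θ with hσ
  have hmono : StrictMono (θ ∘ σ) :=
    (Tuple.monotone_sort θ).strictMono_of_injective (hinj.comp σ.injective)
  set φ : ℕ → ℝ := fun k => if h : k < n then θ (σ ⟨k, h⟩) else θ (σ ⟨0, hnpos⟩) + 2 * Real.pi with hφ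
  have hsum : ∑ k ∈ Finset.range n, (φ (k+1) - φ k) = 2 * Real.pi := by
    rw [Finset.sum_range_sub]
    have h0 : φ 0 = θ (σ ⟨0, hnpos⟩) := by simp [hφ, hnpos]
    have hn' : φ n = θ (σ ⟨0, hnpos⟩) + 2 * Real.pi := by simp [hφ]
    rw [h0, hn']; ring
  -- some gap is ≤ 2π/n
  have hgap : ∃ k ∈ Finset.range n, φ (k+1) - φ k ≤ 2 * Real.pi / n := by
    by_contra h
    push_neg at h
    have : ∑ k ∈ Finset.range n, (2 * Real.pi / n) < ∑ k ∈ Finset.range n, (φ (k+1) - φ k) :=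
      Finset.sum_lt_sum_of_nonempty (Finset.nonempty_range_iff.mpr (by omega)) h
    rw [hsum, Finset.sum_const, Finset.card_range, nsmul_eq_mul] at this
    have hne : (n:ℝ) ≠ 0 := by exact_mod_cast hnpos.ne'
    have : (n:ℝ) * (2 * Real.pi / n) = 2 * Real.pi := by field_simp
    linarith
  obtain ⟨k, hk, hkle⟩ := hgap
  rw [Finset.mem_range] at hk
  have h2πn_pos : 0 < 2 * Real.pi / n := by positivity
  have h2πn_le : 2 * Real.pi / n ≤ Real.pi := by
    rw [div_le_iff₀ (by exact_mod_cast hnpos)]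
    nlinarith [show (2:ℝ) ≤ n by exact_mod_cast hn]
  by_cases hk1 : k + 1 < n
  · -- consecutive gap
    refine ⟨σ ⟨k+1, hk1⟩, σ ⟨k, hk⟩, ?_, ?_⟩
    · intro h
      exact absurd (σ.injective h) (by simp [Fin.ext_iff])
    · have hδ : θ (σ ⟨k+1, hk1⟩) - θ (σ ⟨k, hk⟩) = φ (k+1) - φ k := by
        simp [hφ, hk1, hk]
      rw [hδ]
      have h0 : 0 ≤ φ (k+1) - φ k := by
        have h := hmono.monotone (show (⟨k, hk⟩ : Fin n) ≤ ⟨k+1, hk1⟩ by simp [Fin.le_def])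
        simp only [Function.comp_apply] at h
        simp only [hφ]
        rw [dif_pos hk1, dif_pos hk]
        linarith
      exact Real.cos_le_cos_of_nonneg_of_le_pi h0 h2πn_le hkle
  · -- wrap-around gap : k = n - 1
    have hkn : k + 1 = n := by omega
    set a := θ (σ ⟨0, hnpos⟩) with ha
    set b := θ (σ ⟨k, hk⟩) with hb
    have hδ : φ (k+1) - φ k = a + 2 * Real.pi - b := by
      simp only [hφ]
      rw [dif_neg (by omega), dif_pos hk]
    rw [hδ] at hkle
    have hab : a ≤ b := hmono.monotone (show (⟨0, hnpos⟩ : Fin n) ≤ ⟨k, hk⟩ by simp [Fin.le_def])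
    have h0 : 0 ≤ a + 2 * Real.pi - b := by
      have := hlb (σ ⟨0, hnpos⟩)
      have := hub (σ ⟨k, hk⟩)
      rw [← ha] at *; rw [← hb] at *
      linarith
    refine ⟨σ ⟨k, hk⟩, σ ⟨0, hnpos⟩, ?_, ?_⟩
    · intro h
      have := σ.injective h
      simp [Fin.ext_iff] at this
      omega
    · rw [← hb, ← ha]
      have : Real.cos (b - a) = Real.cos (a + 2 * Real.pi - b) := by
        have : b - a = 2 * Real.pi - (a + 2 * Real.pi - b) := by ring
        rw [this, Real.cos_sub, Real.cos_two_pi, Real.sin_two_pi]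
        ring
      rw [this]
      exact Real.cos_le_cos_of_nonneg_of_le_pi h0 h2πn_le hkle

theorem exists_two_points_vector_sum_large
    (n : ℕ) (hn : 2 ≤ n)
    (O : EuclideanSpace ℝ (Fin 2)) (R : ℝ) (hR : 0 < R)
    (A : Fin n → EuclideanSpace ℝ (Fin 2))
    (hinj : Function.Injective A)
    (hdist : ∀ i : Fin n, dist O (A i) = R) :
    ∃ i j : Fin n, i ≠ j ∧
      ‖(A i -ᵥ O) + (A j -ᵥ O)‖ ≥ 2 * R * Real.cos (Real.pi / n) := by
  set v : Fin n → EuclideanSpace ℝ (Fin 2) := fun i => A i -ᵥ O with hv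
  have hnorm : ∀ i, ‖v i‖ = R := by
    intro i
    rw [hv]
    simp only [show A i -ᵥ O = A i - O from rfl]
    rw [← dist_eq_norm, dist_comm]
    exact hdist i
  set z : Fin n → ℂ := fun i => ⟨v i 0, v i 1⟩ with hz
  have habs : ∀ i, ‖z i‖ = R := by
    intro i
    rw [← hnorm i, EuclideanSpace.norm_eq, Complex.norm_def, Complex.normSq_mk]
    congr 1
    rw [Fin.sum_univ_two]
    simp [Real.norm_eq_abs, sq_abs]
    ring
  have hzne : ∀ i, z i ≠ 0 := by
    intro i h
    have h2 := habs i
    rw [h] at h2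
    simp at h2
    exact hR.ne' h2.symm
  set θ : Fin n → ℝ := fun i => (z i).arg with hθ
  have hcos : ∀ i, v i 0 = R * Real.cos (θ i) := by
    intro i
    rw [hθ]
    rw [Complex.cos_arg (hzne i), habs i]
    field_simp
    rfl
  have hsin : ∀ i, v i 1 = R * Real.sin (θ i) := by
    intro i
    rw [hθ, Complex.sin_arg, habs i]
    field_simp
    rfl
  have hθinj : Function.Injective θ := by
    intro i j h
    apply hinj
    have h0 : v i 0 = v j 0 := by rw [hcos i, hcos j, h]
    have h1 : v i 1 = v j 1 := by rw [hsin i, hsin j, h]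
    have hvij : v i = v j := by
      ext k
      fin_cases k <;> assumption
    rw [hv] at hvij
    exact vsub_left_cancel hvij
  obtain ⟨i, j, hij, hcosge⟩ := exists_close_angles n hn θ hθinj
    (fun i => Complex.neg_pi_lt_arg _) (fun i => Complex.arg_le_pi _)
  refine ⟨i, j, hij, ?_⟩
  have hinner : inner ℝ (v i) (v j) = R ^ 2 * Real.cos (θ i - θ j) := by
    rw [PiLp.inner_apply, Fin.sum_univ_two]
    simp only [RCLike.inner_apply, starRingEnd_apply, star_trivial]
    rw [hcos i, hcos j, hsin i, hsin j, Real.cos_sub]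
    ring
  have hsq : ‖v i + v j‖ ^ 2 = 2 * R ^ 2 * (1 + Real.cos (θ i - θ j)) := by
    rw [norm_add_sq_real, hnorm i, hnorm j, hinner]
    ring
  have hkey : (2 * R * Real.cos (Real.pi / n)) ^ 2 ≤ ‖v i + v j‖ ^ 2 := by
    rw [hsq]
    have hc2 : Real.cos (Real.pi / n) ^ 2 = (1 + Real.cos (2 * Real.pi / n)) / 2 := by
      have := Real.cos_sq (Real.pi / n)
      rw [this]
      have : 2 * (Real.pi / n) = 2 * Real.pi / n := by ring
      rw [this]
      ring
    nlinarith [hcosge, sq_nonneg R]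
  have hnn : 0 ≤ 2 * R * Real.cos (Real.pi / n) := by
    have hπ := Real.pi_pos
    have h1 : 0 ≤ Real.pi / n := by positivity
    have h2 : Real.pi / n ≤ Real.pi / 2 := by
      apply div_le_div_of_nonneg_left hπ.le two_pos
      exact_mod_cast hn
    have := Real.cos_nonneg_of_mem_Icc ⟨by linarith, h2⟩
    positivity
  calc 2 * R * Real.cos (Real.pi / n)
      = Real.sqrt ((2 * R * Real.cos (Real.pi / n)) ^ 2) := (Real.sqrt_sq hnn).symm
    _ ≤ Real.sqrt (‖v i + v j‖ ^ 2) := Real.sqrt_le_sqrt hkey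
    _ = ‖v i + v j‖ := Real.sqrt_sq (norm_nonneg _)
end
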